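/- Write the shifted Bernoulli-Catalan polynomials Q̃_n(w) = Q_n(w + 1/2), so Q̃_{2ν}(w) = ∑_{j=0}^{ν} a_j^{(ν)} w^{2j} and Q̃_{2ν-1}(w) = ∑_{j=1}^{ν} b_j^{(ν)} w^{2j-1}. Then all coefficients are nonzero with alternating signs: sgn(a_j^{(ν)}) = (-1)^{ν-j} and sgn(b_j^{(ν)}) = (-1)^{ν-j}. -/

import Mathlib

open Polynomial Finset

/-- The operator `𝒦 = 2 ∑_{r≥1} ((2^{2r}-1)/(2r)!) B_{2r} (d/dz)^{2r-2}` acting on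
polynomials (the sum is finite on any polynomial, since high derivatives vanish). -/
noncomputable def KOp (P : Polynomial ℚ) : Polynomial ℚ :=
  2 * ∑ r ∈ Finset.Icc 1 (P.natDegree + 1),
    Polynomial.C ((((2 : ℚ) ^ (2 * r) - 1) / (Nat.factorial (2 * r))) * _root_.bernoulli (2 * r)) *
      (Polynomial.derivative^[2 * r - 2] P)

namespace BCAux

open Real in
lemma bern_sign (r : ℕ) (hr : 1 ≤ r) : 0 < (-1:ℚ)^(r-1) * _root_.bernoulli (2*r) := by
  have h := hasSum_zeta_nat (k := r) (by omega)
  have h1 : (1:ℝ) ≤ ((-1 : ℝ) ^ (r + 1) * (2 : ℝ) ^ (2 * r - 1) * π ^ (2 * r) *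
      _root_.bernoulli (2 * r) / (Nat.factorial (2*r) : ℝ)) := by
    have := le_hasSum h 1 (fun j _ => by positivity)
    simpa using this
  have hc : (0:ℝ) < (2:ℝ) ^ (2*r-1) * π ^ (2*r) / (Nat.factorial (2*r) : ℝ) := by positivity
  have key : (0:ℝ) < (-1:ℝ)^(r+1) * (_root_.bernoulli (2*r) : ℝ) := by
    have e : (-1 : ℝ) ^ (r + 1) * (2 : ℝ) ^ (2 * r - 1) * π ^ (2 * r) *
        _root_.bernoulli (2 * r) / (Nat.factorial (2*r) : ℝ) =
        ((-1:ℝ)^(r+1) * (_root_.bernoulli (2*r) : ℝ)) *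
          ((2:ℝ) ^ (2*r-1) * π ^ (2*r) / (Nat.factorial (2*r) : ℝ)) := by
      ring
    nlinarith [h1, hc, e]
  have keyq : (0:ℚ) < (-1:ℚ)^(r+1) * _root_.bernoulli (2*r) := by
    have : ((((-1:ℚ)^(r+1) * _root_.bernoulli (2*r)) : ℚ) : ℝ) =
        (-1:ℝ)^(r+1) * (_root_.bernoulli (2*r) : ℝ) := by
      push_cast; ring
    exact_mod_cast this ▸ key
  have e2 : r + 1 = (r - 1) + 2 := by omega
  rw [e2, pow_add] at keyq
  simpa using keyq

/-- The sign/positivity invariant for the shifted polynomials. -/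
def SInv (n : ℕ) (P : Polynomial ℚ) : Prop :=
  (∀ m : ℕ, m ≤ n → m % 2 = n % 2 → 0 < (-1:ℚ)^((n-m)/2) * P.coeff m) ∧
  (∀ m : ℕ, n < m ∨ m % 2 ≠ n % 2 → P.coeff m = 0)

lemma inv_mul_nonneg {a b : ℕ} {A B : Polynomial ℚ} (hA : SInv a A) (hB : SInv b B) (q : ℕ) :
    0 ≤ (-1:ℚ)^((a+b-q)/2) * (A*B).coeff q := by
  rw [coeff_mul, Finset.mul_sum]
  apply Finset.sum_nonneg
  intro x hx
  rw [Finset.HasAntidiagonal.mem_antidiagonal] at hx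
  by_cases h1 : a < x.1 ∨ x.1 % 2 ≠ a % 2
  · rw [hA.2 _ h1]; simp
  by_cases h2 : b < x.2 ∨ x.2 % 2 ≠ b % 2
  · rw [hB.2 _ h2]; simp
  push_neg at h1 h2
  have e : (a + b - q)/2 = (a - x.1)/2 + (b - x.2)/2 := by omega
  have hp1 := hA.1 x.1 h1.1 h1.2
  have hp2 := hB.1 x.2 h2.1 h2.2
  have : (-1:ℚ)^((a+b-q)/2) * (A.coeff x.1 * B.coeff x.2)
      = ((-1:ℚ)^((a-x.1)/2) * A.coeff x.1) * ((-1:ℚ)^((b-x.2)/2) * B.coeff x.2) := by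
    rw [e, pow_add]; ring
  rw [this]
  exact le_of_lt (mul_pos hp1 hp2)

lemma inv_mul_zero {a b : ℕ} {A B : Polynomial ℚ} (hA : SInv a A) (hB : SInv b B) (q : ℕ)
    (hq : a + b < q ∨ q % 2 ≠ (a+b) % 2) : (A*B).coeff q = 0 := by
  rw [coeff_mul]
  apply Finset.sum_eq_zero
  intro x hx
  rw [Finset.HasAntidiagonal.mem_antidiagonal] at hx
  by_cases h1 : a < x.1 ∨ x.1 % 2 ≠ a % 2
  · rw [hA.2 _ h1]; simp
  push_neg at h1
  have h2 : b < x.2 ∨ x.2 % 2 ≠ b % 2 := by omega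
  rw [hB.2 _ h2]; simp

lemma KOp_coeff (S : Polynomial ℚ) (m : ℕ) :
    (KOp S).coeff m = ∑ r ∈ Finset.Icc 1 (S.natDegree + 1),
      2 * ((((2 : ℚ) ^ (2 * r) - 1) / (Nat.factorial (2 * r))) * _root_.bernoulli (2 * r)) *
        ((m + (2*r-2)).descFactorial (2*r-2) : ℚ) * S.coeff (m + (2*r-2)) := by
  have h2 : (2 : Polynomial ℚ) = C 2 := (Polynomial.C_eq_natCast 2).symm
  rw [KOp, h2, coeff_C_mul, finset_sum_coeff, Finset.mul_sum]
  apply Finset.sum_congr rfl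
  intro r _
  rw [coeff_C_mul, coeff_iterate_derivative, nsmul_eq_mul]
  ring

lemma term_nonneg {n : ℕ} {S : Polynomial ℚ}
    (hz : ∀ m : ℕ, n < m ∨ m % 2 ≠ n % 2 → S.coeff m = 0)
    (hnn : ∀ m : ℕ, 0 ≤ (-1:ℚ)^((n-m)/2) * S.coeff m)
    {m r : ℕ} (hr : 1 ≤ r) (hm : m ≤ n) (hm2 : m % 2 = n % 2) :
    0 ≤ (-1:ℚ)^((n-m)/2) *
      (2 * ((((2 : ℚ) ^ (2 * r) - 1) / (Nat.factorial (2 * r))) * _root_.bernoulli (2 * r)) *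
        ((m + (2*r-2)).descFactorial (2*r-2) : ℚ) * S.coeff (m + (2*r-2))) := by
  set m' := m + (2*r-2) with hm'
  by_cases hle : m' ≤ n
  · have e : (n-m)/2 = (n-m')/2 + (r-1) := by omega
    have hcr : (0:ℚ) < ((2 : ℚ) ^ (2 * r) - 1) / (Nat.factorial (2 * r)) := by
      apply div_pos _ (by positivity)
      have : (1:ℚ) < 2 ^ (2*r) := one_lt_pow₀ (by norm_num) (by omega)
      linarith
    have hb := bern_sign r hr
    have hs := hnn m'
    have e2 : (-1:ℚ)^((n-m)/2) *
      (2 * ((((2 : ℚ) ^ (2 * r) - 1) / (Nat.factorial (2 * r))) * _root_.bernoulli (2 * r)) *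
        ((m + (2*r-2)).descFactorial (2*r-2) : ℚ) * S.coeff m')
      = (2 * (((2 : ℚ) ^ (2 * r) - 1) / (Nat.factorial (2 * r))) *
          ((m + (2*r-2)).descFactorial (2*r-2) : ℚ)) *
        (((-1:ℚ)^(r-1) * _root_.bernoulli (2*r)) * ((-1:ℚ)^((n-m')/2) * S.coeff m')) := by
      rw [e, pow_add]; ring
    rw [e2]
    have hfac : (0:ℚ) ≤ 2 * (((2 : ℚ) ^ (2 * r) - 1) / (Nat.factorial (2 * r))) *
          ((m + (2*r-2)).descFactorial (2*r-2) : ℚ) := by positivity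
    exact mul_nonneg hfac (mul_nonneg (le_of_lt hb) hs)
  · rw [hz m' (Or.inl (by omega))]; simp

lemma inv_KOp {n : ℕ} (hn : 2 ≤ n) {S : Polynomial ℚ}
    (hz : ∀ m : ℕ, n < m ∨ m % 2 ≠ n % 2 → S.coeff m = 0)
    (hnn : ∀ m : ℕ, 0 ≤ (-1:ℚ)^((n-m)/2) * S.coeff m)
    (hpos : ∀ m : ℕ, 1 ≤ m → m ≤ n → m % 2 = n % 2 → 0 < (-1:ℚ)^((n-m)/2) * S.coeff m) :
    SInv n (KOp S) := by
  have hdeg : n ≤ S.natDegree := by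
    apply le_natDegree_of_ne_zero
    have := hpos n (by omega) le_rfl rfl
    intro h; rw [h, mul_zero] at this; exact lt_irrefl 0 this
  constructor
  · intro m hm hm2
    rw [KOp_coeff, Finset.mul_sum]
    rcases Nat.eq_zero_or_pos m with hm0 | hm1
    · apply Finset.sum_pos' (fun r hr => term_nonneg hz hnn (Finset.mem_Icc.mp hr).1 hm hm2)
      refine ⟨2, Finset.mem_Icc.mpr ⟨by omega, by omega⟩, ?_⟩
      subst hm0
      have hS2 : 0 < (-1:ℚ)^((n-2)/2) * S.coeff 2 := hpos 2 (by omega) (by omega) (by omega)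
      have hb := bern_sign 2 (by omega)
      have e : (n-0)/2 = (n-2)/2 + (2-1) := by omega
      have e2 : (-1:ℚ)^((n-0)/2) *
        (2 * ((((2 : ℚ) ^ (2 * 2) - 1) / (Nat.factorial (2 * 2))) * _root_.bernoulli (2 * 2)) *
          ((0 + (2*2-2)).descFactorial (2*2-2) : ℚ) * S.coeff (0 + (2*2-2)))
        = (2 * (((2 : ℚ) ^ (2 * 2) - 1) / (Nat.factorial (2 * 2))) *
            ((0 + (2*2-2)).descFactorial (2*2-2) : ℚ)) *
          (((-1:ℚ)^(2-1) * _root_.bernoulli (2*2)) * ((-1:ℚ)^((n-2)/2) * S.coeff 2)) := by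
        rw [e, pow_add]; norm_num; ring
      rw [e2]
      apply mul_pos _ (mul_pos hb hS2)
      have hcr : (0:ℚ) < ((2 : ℚ) ^ (2 * 2) - 1) / (Nat.factorial (2 * 2)) := by
        norm_num [Nat.factorial]
      have hd : (0:ℚ) < ((0 + (2*2-2)).descFactorial (2*2-2) : ℚ) := by norm_num
      positivity
    · apply Finset.sum_pos' (fun r hr => term_nonneg hz hnn (Finset.mem_Icc.mp hr).1 hm hm2)
      refine ⟨1, Finset.mem_Icc.mpr ⟨le_rfl, by omega⟩, ?_⟩
      have hS1 : 0 < (-1:ℚ)^((n-m)/2) * S.coeff m := hpos m hm1 hm hm2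
      have hb : (0:ℚ) < _root_.bernoulli 2 := by
        simpa using bern_sign 1 le_rfl
      have e2 : (-1:ℚ)^((n-m)/2) *
        (2 * ((((2 : ℚ) ^ (2 * 1) - 1) / (Nat.factorial (2 * 1))) * _root_.bernoulli (2 * 1)) *
          ((m + (2*1-2)).descFactorial (2*1-2) : ℚ) * S.coeff (m + (2*1-2)))
        = (2 * (((2 : ℚ) ^ (2 * 1) - 1) / (Nat.factorial (2 * 1))) * _root_.bernoulli (2*1)) *
          ((-1:ℚ)^((n-m)/2) * S.coeff m) := by
        norm_num; ring
      rw [e2]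
      apply mul_pos _ hS1
      have : (Nat.factorial (2*1) : ℚ) = 2 := by norm_num [Nat.factorial]
      rw [this]
      nlinarith [hb]
  · intro m hm
    rw [KOp_coeff]
    apply Finset.sum_eq_zero
    intro r _
    rw [hz (m + (2*r-2)) (by omega), mul_zero]

lemma sum_comp' {ι : Type*} (s : Finset ι) (f : ι → Polynomial ℚ) (q : Polynomial ℚ) :
    (∑ i ∈ s, f i).comp q = ∑ i ∈ s, (f i).comp q := by
  simp [Polynomial.comp, Polynomial.eval₂_finset_sum]

lemma iter_deriv_comp (p : Polynomial ℚ) (c : ℚ) (k : ℕ) :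
    Polynomial.derivative^[k] (p.comp (X + C c)) =
      (Polynomial.derivative^[k] p).comp (X + C c) := by
  induction k generalizing p with
  | zero => simp
  | succ k ih =>
    rw [Function.iterate_succ_apply, Function.iterate_succ_apply]
    rw [derivative_comp]
    simp [ih]

lemma KOp_comp (P : Polynomial ℚ) (c : ℚ) :
    (KOp P).comp (X + C c) = KOp (P.comp (X + C c)) := by
  have hdeg : (P.comp (X + C c)).natDegree = P.natDegree := by
    rw [natDegree_comp, natDegree_X_add_C, mul_one]
  rw [KOp, KOp, hdeg, mul_comp, sum_comp']
  congr 1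
  · simp
  · apply Finset.sum_congr rfl
    intro r _
    rw [mul_comp, C_comp, iter_deriv_comp]

end BCAux

/-- The shifted Bernoulli-Catalan polynomials `Q̃_n(w) = Q_n(w + 1/2)` have all
coefficients nonzero with alternating signs: the coefficient `a_j^{(ν)}` of `w^{2j}` in
`Q̃_{2ν}` has sign `(-1)^{ν-j}` (for `0 ≤ j ≤ ν`), and the coefficient `b_j^{(ν)}` of
`w^{2j-1}` in `Q̃_{2ν-1}` has sign `(-1)^{ν-j}` (for `1 ≤ j ≤ ν`). -/
theorem bernoulliCatalan_shifted_alternating_signs (Q : ℕ → Polynomial ℚ)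
    (h0 : Q 0 = 0) (h1 : Q 1 = X - C (1 / 2))
    (hrec : ∀ n : ℕ, 2 ≤ n → Q n = KOp (∑ k ∈ Finset.Ico 1 n, Q k * Q (n - k))) :
    ∀ ν : ℕ, 1 ≤ ν →
      (∀ j : ℕ, j ≤ ν →
        0 < (-1 : ℚ) ^ (ν - j) * ((Q (2 * ν)).comp (X + C (1 / 2))).coeff (2 * j)) ∧
      (∀ j : ℕ, 1 ≤ j → j ≤ ν →
        0 < (-1 : ℚ) ^ (ν - j) * ((Q (2 * ν - 1)).comp (X + C (1 / 2))).coeff (2 * j - 1)) := by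
  classical
  set u : Polynomial ℚ := X + C (1/2) with hu
  have hQt1 : (Q 1).comp u = X := by
    rw [h1, sub_comp, X_comp, C_comp, hu]; ring
  have key : ∀ n : ℕ, 1 ≤ n → BCAux.SInv n ((Q n).comp u) := by
    intro n
    induction n using Nat.strong_induction_on with
    | _ n ih =>
    intro hn
    rcases eq_or_lt_of_le hn with h1n | h2n
    · -- n = 1
      rw [← h1n, hQt1]
      constructor
      · intro m hm hm2
        have : m = 1 := by omega
        subst this
        simp
      · intro m hm
        have : ¬ (1 = m) := by omega
        simp [coeff_X, this]
    · -- n ≥ 2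
      have hn2 : 2 ≤ n := h2n
      have hS : (Q n).comp u =
          KOp (∑ k ∈ Finset.Ico 1 n, ((Q k).comp u) * ((Q (n-k)).comp u)) := by
        rw [hrec n hn2, hu, BCAux.KOp_comp]
        congr 1
        rw [BCAux.sum_comp']
        exact Finset.sum_congr rfl fun k _ => mul_comp _ _ _
      rw [hS]
      have hik : ∀ k ∈ Finset.Ico 1 n, BCAux.SInv k ((Q k).comp u) ∧
          BCAux.SInv (n-k) ((Q (n-k)).comp u) := by
        intro k hk
        rw [Finset.mem_Ico] at hk
        exact ⟨ih k (by omega) hk.1, ih (n-k) (by omega) (by omega)⟩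
      apply BCAux.inv_KOp hn2
      · intro m hm
        rw [finset_sum_coeff]
        apply Finset.sum_eq_zero
        intro k hk
        have hkn : k + (n - k) = n := by
          rw [Finset.mem_Ico] at hk; omega
        apply BCAux.inv_mul_zero (hik k hk).1 (hik k hk).2
        rw [hkn]; exact hm
      · intro m
        rw [finset_sum_coeff, Finset.mul_sum]
        apply Finset.sum_nonneg
        intro k hk
        have hkn : k + (n - k) = n := by
          rw [Finset.mem_Ico] at hk; omega
        have := BCAux.inv_mul_nonneg (hik k hk).1 (hik k hk).2 m
        rwa [hkn] at this
      · intro m hm1 hmn hm2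
        rw [finset_sum_coeff, Finset.mul_sum]
        apply Finset.sum_pos'
        · intro k hk
          have hkn : k + (n - k) = n := by
            rw [Finset.mem_Ico] at hk; omega
          have := BCAux.inv_mul_nonneg (hik k hk).1 (hik k hk).2 m
          rwa [hkn] at this
        · refine ⟨1, Finset.mem_Ico.mpr ⟨le_rfl, by omega⟩, ?_⟩
          rw [hQt1]
          obtain ⟨m', rfl⟩ : ∃ m', m = m' + 1 := ⟨m - 1, by omega⟩
          rw [coeff_X_mul]
          have hprev := ih (n-1) (by omega) (by omega)
          have hp := hprev.1 m' (by omega) (by omega)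
          have e : (n - (m'+1))/2 = (n - 1 - m')/2 := by omega
          rw [e]
          exact hp
  intro ν hν
  constructor
  · intro j hj
    have h := (key (2*ν) (by omega)).1 (2*j) (by omega) (by omega)
    have e : (2*ν - 2*j)/2 = ν - j := by omega
    rwa [e] at h
  · intro j hj1 hj2
    have h := (key (2*ν - 1) (by omega)).1 (2*j - 1) (by omega) (by omega)
    have e : (2*ν - 1 - (2*j - 1))/2 = ν - j := by omega
    rwa [e] at h
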